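/- Let τ > 0, let s₀ = σ₀ + iθ₀ with σ₀, θ₀ ∈ ℝ and θ₀ ≠ 0, and suppose the coefficients of Δ satisfy, with D = τ²θ₀² − sin²(τθ₀): a₁ = −2σ₀ − 2θ₀(τθ₀ − sin(τθ₀)cos(τθ₀))/D, a₀ = σ₀² + 2σ₀θ₀(τθ₀ − sin(τθ₀)cos(τθ₀))/D + θ₀²(τ²θ₀² + sin²(τθ₀))/D, α₁ = 2θ₀e^{σ₀τ}(τθ₀cos(τθ₀) − sin(τθ₀))/D, and α₀ = 2θ₀e^{σ₀τ}(σ₀(sin(τθ₀) − τθ₀cos(τθ₀)) − τθ₀²sin(τθ₀))/D. Then s₀ and conj(s₀) form a pair of strictly dominant roots of Δ: Δ(s₀) = Δ(conj(s₀)) = 0 and every s ∈ ℂ with s ∉ {s₀, conj(s₀)} and Δ(s) = 0 satisfies Re s < σ₀. -/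

import Mathlib

open Complex ComplexConjugate

noncomputable section

namespace QPMID

/-- The normalized quasipolynomial `Q(z) = z² + Az + B + e^{-z}(Cz+E)`. -/
def Qf (A B C E : ℝ) : ℂ → ℂ := fun z => z^2 + A*z + B + Complex.exp (-z) * (C*z + E)

/-- Its derivative. -/
def Qd (A B C E : ℝ) : ℂ → ℂ := fun z => 2*z + A + Complex.exp (-z) * (C - (C*z + E))

/-- The polynomial part and the reflected polynomial. -/
def Pf (A B : ℝ) : ℂ → ℂ := fun z => z^2 + A*z + B
def Pr (A B : ℝ) : ℂ → ℂ := fun z => z^2 - A*z + B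
def Lf (C E : ℝ) : ℂ → ℂ := fun z => C*z + E
def Ff (A B C E : ℝ) : ℂ → ℂ := fun z => Qf A B C E z * Pr A B z

lemma hasDerivAt_Qf (A B C E : ℝ) (z : ℂ) : HasDerivAt (Qf A B C E) (Qd A B C E z) z := by
  have h1 : HasDerivAt (fun z : ℂ => Complex.exp (-z)) (-Complex.exp (-z)) z := by
    simpa [Function.comp_def] using (Complex.hasDerivAt_exp (-z)).comp z (hasDerivAt_neg z)
  have h2 : HasDerivAt (fun z : ℂ => (C:ℂ)*z + E) (C:ℂ) z := by
    simpa using ((hasDerivAt_id z).const_mul (C:ℂ)).add_const (E:ℂ)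
  have h3 : HasDerivAt (fun z : ℂ => Complex.exp (-z) * ((C:ℂ)*z + E))
      (-Complex.exp (-z) * ((C:ℂ)*z + E) + Complex.exp (-z) * C) z := h1.mul h2
  have h4 : HasDerivAt (fun z : ℂ => z^2 + (A:ℂ)*z + B) (2*z + A) z := by
    simpa using ((hasDerivAt_pow 2 z).add ((hasDerivAt_id z).const_mul (A:ℂ))).add_const (B:ℂ)
  have h5 := h4.add h3
  have he : Qd A B C E z = (2*z + A) + (-Complex.exp (-z) * ((C:ℂ)*z + E) + Complex.exp (-z) * C) := by
    unfold Qd; ring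
  rw [he]; unfold Qf; exact h5

lemma differentiable_Qf (A B C E : ℝ) : Differentiable ℂ (Qf A B C E) :=
  fun z => (hasDerivAt_Qf A B C E z).differentiableAt

lemma differentiable_Pr (A B : ℝ) : Differentiable ℂ (Pr A B) := by
  unfold Pr; fun_prop

lemma hasDerivAt_Ff (A B C E : ℝ) (z : ℂ) :
    HasDerivAt (Ff A B C E) (Qd A B C E z * Pr A B z + Qf A B C E z * (2*z - A)) z := by
  have h2 : HasDerivAt (Pr A B) (2*z - A) z := by
    unfold Pr
    simpa using ((hasDerivAt_pow 2 z).sub ((hasDerivAt_id z).const_mul (A:ℂ))).add_const (B:ℂ)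
  exact (hasDerivAt_Qf A B C E z).mul h2

lemma differentiable_Ff (A B C E : ℝ) : Differentiable ℂ (Ff A B C E) :=
  fun z => (hasDerivAt_Ff A B C E z).differentiableAt

lemma differentiable_dslope {f : ℂ → ℂ} (hf : Differentiable ℂ f) (a : ℂ) :
    Differentiable ℂ (dslope f a) := by
  intro b
  rcases eq_or_ne b a with rfl | hb
  · obtain ⟨p, hp⟩ := hf.analyticAt b
    exact AnalyticAt.differentiableAt ⟨_, hp.has_fpower_series_dslope_fslope⟩
  · exact (differentiableAt_dslope_of_ne hb).mpr (hf b)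

lemma Qf_conj (A B C E : ℝ) (z : ℂ) : Qf A B C E (conj z) = conj (Qf A B C E z) := by
  simp only [Qf, map_add, map_mul, map_pow, Complex.conj_ofReal, ← Complex.exp_conj, map_neg]

lemma Qd_conj (A B C E : ℝ) (z : ℂ) : Qd A B C E (conj z) = conj (Qd A B C E z) := by
  simp only [Qd, map_add, map_sub, map_mul, map_pow, Complex.conj_ofReal, ← Complex.exp_conj,
    map_neg, map_ofNat]


def Gf (A B C E ω : ℝ) : ℂ → ℂ :=
  dslope (dslope (dslope (dslope (Ff A B C E) ((ω:ℂ)*I)) ((ω:ℂ)*I)) (-((ω:ℂ)*I))) (-((ω:ℂ)*I))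

lemma differentiable_Gf (A B C E ω : ℝ) : Differentiable ℂ (Gf A B C E ω) :=
  differentiable_dslope (differentiable_dslope (differentiable_dslope
    (differentiable_dslope (differentiable_Ff A B C E) _) _) _) _

section
variable {A B C E ω : ℝ}

lemma G_eq (hω : ω ≠ 0)
    (hQ0 : Qf A B C E ((ω:ℂ)*I) = 0) (hQ0' : Qf A B C E (-((ω:ℂ)*I)) = 0)
    (hQd0 : Qd A B C E ((ω:ℂ)*I) = 0) (hQd0' : Qd A B C E (-((ω:ℂ)*I)) = 0)
    {z : ℂ} (hz1 : z ≠ (ω:ℂ)*I) (hz2 : z ≠ -((ω:ℂ)*I)) :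
    Gf A B C E ω z = Ff A B C E z / ((z - (ω:ℂ)*I)^2 * (z + (ω:ℂ)*I)^2) := by
  set a : ℂ := (ω:ℂ)*I with ha
  have ha0 : a ≠ 0 := by
    simp only [ha, ne_eq, mul_eq_zero, Complex.ofReal_eq_zero, Complex.I_ne_zero, or_false]
    exact hω
  have hone : (-a) ≠ a := fun h => ha0 (by linear_combination -h/2)
  have hF0 : Ff A B C E a = 0 := by unfold Ff; rw [hQ0]; ring
  have hF0' : Ff A B C E (-a) = 0 := by unfold Ff; rw [hQ0']; ring
  set F := Ff A B C E with hFdef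
  set G1 := dslope F a with hG1def
  have hG1 : ∀ w : ℂ, w ≠ a → G1 w = F w / (w - a) := by
    intro w hw
    rw [hG1def, dslope_of_ne _ hw, slope_def_field, hF0, sub_zero]
  have hG1a : G1 a = 0 := by
    rw [hG1def, dslope_same]
    rw [(hasDerivAt_Ff A B C E a).deriv, hQ0, hQd0]; ring
  set G2 := dslope G1 a with hG2def
  have hG2 : ∀ w : ℂ, w ≠ a → G2 w = F w / (w - a)^2 := by
    intro w hw
    rw [hG2def, dslope_of_ne _ hw, slope_def_field, hG1a, sub_zero, hG1 w hw, div_div, ← pow_two]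
  have hG2b : G2 (-a) = 0 := by rw [hG2 _ hone, hF0']; simp
  set G3 := dslope G2 (-a) with hG3def
  have hG3 : ∀ w : ℂ, w ≠ a → w ≠ -a → G3 w = F w / ((w - a)^2 * (w + a)) := by
    intro w hw hw'
    rw [hG3def, dslope_of_ne _ hw', slope_def_field, hG2b, sub_zero, hG2 w hw,
      div_div, sub_neg_eq_add]
  have hG3b : G3 (-a) = 0 := by
    rw [hG3def, dslope_same]
    have hev : G2 =ᶠ[nhds (-a)] (fun w => F w * ((w - a)^2)⁻¹) := by
      have hopen : ∀ᶠ w in nhds (-a), w ∈ {u : ℂ | u ≠ a} :=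
        (isOpen_compl_singleton).eventually_mem (show (-a) ∈ {u : ℂ | u ≠ a} from hone)
      filter_upwards [hopen] with w hw
      rw [hG2 w hw, div_eq_mul_inv]
    have hne2 : ((-a : ℂ) - a)^2 ≠ 0 := pow_ne_zero _ (by
      intro h; exact hone (by linear_combination h))
    have hden : HasDerivAt (fun w : ℂ => (w - a)^2) (2*(-a - a)) (-a) := by
      have := ((hasDerivAt_id (-a : ℂ)).sub_const a).pow 2
      simpa [Pi.pow_def] using this
    have hF' : HasDerivAt F 0 (-a) := by
      have h := hasDerivAt_Ff A B C E (-a)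
      rw [hQ0', hQd0'] at h
      simpa using h
    have hval := hF'.mul (hden.inv hne2)
    rw [hev.deriv_eq, show (fun w => F w * ((w - a)^2)⁻¹) = F * (fun w => (w - a)^2)⁻¹ from rfl, hval.deriv, hF0']
    ring
  rw [Gf]
  rw [show dslope (dslope (dslope (Ff A B C E) ((ω:ℂ)*I)) ((ω:ℂ)*I)) (-((ω:ℂ)*I)) = G3 from rfl]
  rw [dslope_of_ne _ hz2, slope_def_field, hG3b, sub_zero, hG3 z hz1 hz2,
    div_div, sub_neg_eq_add]
  ring_nf

end

section
variable {A B C E ω : ℝ}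

lemma Pf_val (A B : ℝ) (y : ℝ) :
    Pf A B ((y:ℂ)*I) = ((B - y^2 : ℝ) : ℂ) + ((A*y : ℝ) : ℂ)*I := by
  unfold Pf; push_cast
  linear_combination ((y:ℂ)^2) * Complex.I_sq

lemma Pr_val (A B : ℝ) (y : ℝ) :
    Pr A B ((y:ℂ)*I) = conj (Pf A B ((y:ℂ)*I)) := by
  rw [Pf_val]
  unfold Pr
  rw [map_add, map_mul, Complex.conj_ofReal, Complex.conj_ofReal, Complex.conj_I]
  push_cast
  linear_combination ((y:ℂ)^2) * Complex.I_sq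

lemma Lf_val (C E : ℝ) (y : ℝ) :
    Lf C E ((y:ℂ)*I) = ((E : ℝ) : ℂ) + ((C*y : ℝ) : ℂ)*I := by
  unfold Lf; push_cast; ring

/-- the axis modulus identity -/
lemma axis_identity (h1 : A^2 - C^2 - 2*B = -2*ω^2) (h2 : B^2 - E^2 = ω^4) (y : ℝ) :
    (‖Pf A B ((y:ℂ)*I)‖)^2 - (‖Lf C E ((y:ℂ)*I)‖)^2
      = (y^2 - ω^2)^2 := by
  rw [Pf_val, Lf_val, Complex.sq_norm, Complex.sq_norm, Complex.normSq_add_mul_I,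
    Complex.normSq_add_mul_I]
  ring_nf
  nlinarith [h1, h2, sq_nonneg y]

lemma abs_L_le_abs_P (h1 : A^2 - C^2 - 2*B = -2*ω^2) (h2 : B^2 - E^2 = ω^4) (y : ℝ) :
    ‖Lf C E ((y:ℂ)*I)‖ ≤ ‖Pf A B ((y:ℂ)*I)‖ := by
  have h := axis_identity h1 h2 y
  nlinarith [norm_nonneg (Lf C E ((y:ℂ)*I)), norm_nonneg (Pf A B ((y:ℂ)*I)),
    sq_nonneg ((y:ℝ)^2 - ω^2)]

lemma Qf_split (A B C E : ℝ) (z : ℂ) :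
    Qf A B C E z = Pf A B z + Complex.exp (-z) * Lf C E z := by
  unfold Qf Pf Lf; ring

lemma abs_exp_neg_yI (y : ℝ) : ‖Complex.exp (-((y:ℂ)*I))‖ = 1 := by
  rw [Complex.norm_exp]; simp

/-- Re F ≥ 0 on the imaginary axis -/
lemma reF_nonneg (h1 : A^2 - C^2 - 2*B = -2*ω^2) (h2 : B^2 - E^2 = ω^4) (y : ℝ) :
    0 ≤ (Ff A B C E ((y:ℂ)*I)).re := by
  set p := Pf A B ((y:ℂ)*I)
  set l := Lf C E ((y:ℂ)*I)
  set w := Complex.exp (-((y:ℂ)*I))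
  have hsplit : Ff A B C E ((y:ℂ)*I) = p * conj p + w * l * conj p := by
    unfold Ff
    rw [Qf_split, Pr_val]; ring
  rw [hsplit]
  rw [Complex.add_re, Complex.mul_conj]
  have h1' : (w * l * conj p).re ≥ -(‖l‖ * ‖p‖) := by
    have := Complex.abs_re_le_norm (w * l * conj p)
    have habs : ‖w * l * conj p‖ = ‖l‖ * ‖p‖ := by
      rw [norm_mul, norm_mul, Complex.norm_conj, abs_exp_neg_yI, one_mul]
    rw [habs] at this
    cases abs_le.mp this with
    | intro h _ => linarith
  have hle := abs_L_le_abs_P h1 h2 (A := A) (B := B) y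
  have hnsq : Complex.normSq p = (‖p‖)^2 := (Complex.sq_norm p).symm
  have hp0 : 0 ≤ ‖p‖ := norm_nonneg p
  simp only [Complex.ofReal_re]
  nlinarith [h1']

end

section
variable {A B C E ω : ℝ}

lemma yI_ne (y c : ℝ) (h : y ≠ c) : (y:ℂ)*I ≠ (c:ℂ)*I := by
  intro hh
  exact h (by exact_mod_cast mul_right_cancel₀ Complex.I_ne_zero hh)

lemma den_real (y : ℝ) :
    ((y:ℂ)*I - (ω:ℂ)*I)^2 * ((y:ℂ)*I + (ω:ℂ)*I)^2 = (((y^2-ω^2)^2 : ℝ) : ℂ) := by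
  push_cast
  linear_combination ((I^2 - 1) * ((y:ℂ)^2 - (ω:ℂ)^2)^2) * Complex.I_sq

/-- boundary nonnegativity away from ±ω -/
lemma reG_nonneg_ne (hω : ω ≠ 0)
    (h1 : A^2 - C^2 - 2*B = -2*ω^2) (h2 : B^2 - E^2 = ω^4)
    (hQ0 : Qf A B C E ((ω:ℂ)*I) = 0) (hQ0' : Qf A B C E (-((ω:ℂ)*I)) = 0)
    (hQd0 : Qd A B C E ((ω:ℂ)*I) = 0) (hQd0' : Qd A B C E (-((ω:ℂ)*I)) = 0)
    (y : ℝ) (hy1 : y ≠ ω) (hy2 : y ≠ -ω) :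
    0 ≤ (Gf A B C E ω ((y:ℂ)*I)).re := by
  have hz1 : (y:ℂ)*I ≠ (ω:ℂ)*I := yI_ne y ω hy1
  have hz2 : (y:ℂ)*I ≠ -((ω:ℂ)*I) := by
    have := yI_ne y (-ω) hy2
    push_cast at this
    simpa [neg_mul] using this
  rw [G_eq hω hQ0 hQ0' hQd0 hQd0' hz1 hz2, den_real, Complex.div_ofReal_re]
  apply div_nonneg (reF_nonneg h1 h2 y)
  positivity

/-- boundary nonnegativity everywhere -/
lemma reG_nonneg (hω : ω ≠ 0)
    (h1 : A^2 - C^2 - 2*B = -2*ω^2) (h2 : B^2 - E^2 = ω^4)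
    (hQ0 : Qf A B C E ((ω:ℂ)*I) = 0) (hQ0' : Qf A B C E (-((ω:ℂ)*I)) = 0)
    (hQd0 : Qd A B C E ((ω:ℂ)*I) = 0) (hQd0' : Qd A B C E (-((ω:ℂ)*I)) = 0)
    (y : ℝ) : 0 ≤ (Gf A B C E ω ((y:ℂ)*I)).re := by
  have hcont : Continuous fun t : ℝ => (Gf A B C E ω ((t:ℂ)*I)).re :=
    Complex.continuous_re.comp ((differentiable_Gf A B C E ω).continuous.comp
      (Complex.continuous_ofReal.mul continuous_const))
  have hdense : Dense (({ω, -ω} : Set ℝ)ᶜ) :=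
    Set.Countable.dense_compl ℝ ((Set.toFinite ({ω, -ω} : Set ℝ)).countable)
  have hclosed : IsClosed {t : ℝ | 0 ≤ (Gf A B C E ω ((t:ℂ)*I)).re} :=
    isClosed_le continuous_const hcont
  have hsub : (({ω, -ω} : Set ℝ)ᶜ) ⊆ {t : ℝ | 0 ≤ (Gf A B C E ω ((t:ℂ)*I)).re} := by
    intro t ht
    simp only [Set.mem_compl_iff, Set.mem_insert_iff, Set.mem_singleton_iff, not_or] at ht
    exact reG_nonneg_ne hω h1 h2 hQ0 hQ0' hQd0 hQd0' t ht.1 ht.2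
  have huniv : (Set.univ : Set ℝ) ⊆ {t : ℝ | 0 ≤ (Gf A B C E ω ((t:ℂ)*I)).re} := by
    rw [← hdense.closure_eq]
    exact hclosed.closure_subset_iff.mpr hsub
  exact huniv (Set.mem_univ y)

end

section
variable {A B C E ω : ℝ} {z : ℂ}

lemma norm_exp_neg_le (hz : 0 ≤ z.re) : ‖Complex.exp (-z)‖ ≤ 1 := by
  rw [Complex.norm_exp]
  exact Real.exp_le_one_iff.2 (by simpa using hz)

lemma norm_Q_le (hz : 0 ≤ z.re) :
    ‖Qf A B C E z‖ ≤ ‖z‖^2 + |A| * ‖z‖ + |B| + (|C| * ‖z‖ + |E|) := by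
  have hL : ‖(C:ℂ)*z + E‖ ≤ |C| * ‖z‖ + |E| := by
    refine (norm_add_le _ _).trans (le_of_eq ?_)
    rw [norm_mul, Complex.norm_real, Complex.norm_real, Real.norm_eq_abs, Real.norm_eq_abs]
  have hw : ‖Complex.exp (-z) * ((C:ℂ)*z + E)‖ ≤ |C| * ‖z‖ + |E| := by
    rw [norm_mul]
    have := mul_le_mul (norm_exp_neg_le hz) hL (norm_nonneg _) zero_le_one
    simpa using this
  refine (norm_add_le _ _).trans ?_
  refine add_le_add ((norm_add_le _ _).trans (add_le_add ((norm_add_le _ _).trans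
    (add_le_add (le_of_eq (norm_pow _ _)) (le_of_eq ?_))) (le_of_eq ?_))) hw
  · rw [norm_mul, Complex.norm_real, Real.norm_eq_abs]
  · rw [Complex.norm_real, Real.norm_eq_abs]

lemma norm_Pr_le : ‖Pr A B z‖ ≤ ‖z‖^2 + |A| * ‖z‖ + |B| := by
  refine (norm_add_le _ _).trans (add_le_add ((norm_sub_le _ _).trans
    (add_le_add (le_of_eq (norm_pow _ _)) (le_of_eq ?_))) (le_of_eq ?_))
  · rw [norm_mul, Complex.norm_real, Real.norm_eq_abs]
  · rw [Complex.norm_real, Real.norm_eq_abs]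

lemma exists_bound (hω : ω ≠ 0)
    (hQ0 : Qf A B C E ((ω:ℂ)*I) = 0) (hQ0' : Qf A B C E (-((ω:ℂ)*I)) = 0)
    (hQd0 : Qd A B C E ((ω:ℂ)*I) = 0) (hQd0' : Qd A B C E (-((ω:ℂ)*I)) = 0) :
    ∃ M : ℝ, ∀ z : ℂ, 0 ≤ z.re → ‖Gf A B C E ω z‖ ≤ M := by
  set K : ℝ := 1 + |A| + |B| + |C| + |E| with hK
  have hK1 : 1 ≤ K := by
    have := abs_nonneg A; have := abs_nonneg B; have := abs_nonneg C; have := abs_nonneg E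
    linarith
  set R : ℝ := 2*|ω| + 2*K with hR
  have hRpos : 0 < R := by positivity
  obtain ⟨M₂, hM₂⟩ := (isCompact_closedBall (0:ℂ) R).exists_bound_of_continuousOn
    ((differentiable_Gf A B C E ω).continuous.continuousOn)
  refine ⟨max M₂ 64, fun z hz => ?_⟩
  rcases le_or_gt ‖z‖ R with hle | hgt
  · exact le_max_of_le_left (hM₂ z (by simpa [Metric.mem_closedBall, dist_zero_right] using hle))
  · -- large z
    have hzK : 2*K ≤ ‖z‖ := by
      have : 0 ≤ 2*|ω| := by positivity
      linarith
    have hz1 : 1 ≤ ‖z‖ := by linarith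
    have hzω : 2*|ω| ≤ ‖z‖ := by
      have : 0 ≤ 2*K := by linarith
      linarith
    have hnom : ‖((ω:ℂ)*I)‖ = |ω| := by
      rw [norm_mul, Complex.norm_I, mul_one, Complex.norm_real, Real.norm_eq_abs]
    have hne1 : z ≠ (ω:ℂ)*I := by
      intro h; rw [h, hnom] at hgt
      have : |ω| ≤ R := by
        have : 0 ≤ K := by linarith
        have := abs_nonneg ω
        rw [hR]; linarith
      linarith
    have hne2 : z ≠ -((ω:ℂ)*I) := by
      intro h
      rw [h] at hgt
      rw [norm_neg, hnom] at hgt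
      have : |ω| ≤ R := by
        have : 0 ≤ K := by linarith
        have := abs_nonneg ω
        rw [hR]; linarith
      linarith
    rw [G_eq hω hQ0 hQ0' hQd0 hQd0' hne1 hne2]
    have hd1 : ‖z‖/2 ≤ ‖z - (ω:ℂ)*I‖ := by
      have := norm_sub_norm_le z ((ω:ℂ)*I)
      rw [hnom] at this
      linarith
    have hd2 : ‖z‖/2 ≤ ‖z + (ω:ℂ)*I‖ := by
      have := norm_sub_norm_le z (-((ω:ℂ)*I))
      rw [norm_neg, hnom, sub_neg_eq_add] at this
      linarith
    have hzpos : (0:ℝ) < ‖z‖ := by linarith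
    have hdenpos : (0:ℝ) < ‖(z - (ω:ℂ)*I)^2 * (z + (ω:ℂ)*I)^2‖ := by
      rw [norm_mul, norm_pow, norm_pow]
      have d1 : (0:ℝ) < ‖z - (ω:ℂ)*I‖ := lt_of_lt_of_le (by linarith) hd1
      have d2 : (0:ℝ) < ‖z + (ω:ℂ)*I‖ := lt_of_lt_of_le (by linarith) hd2
      positivity
    rw [norm_div, div_le_iff₀ hdenpos]
    have hFle : ‖Ff A B C E z‖ ≤ 4*‖z‖^4 := by
      have hq := norm_Q_le (A := A) (B := B) (C := C) (E := E) hz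
      have hp := norm_Pr_le (A := A) (B := B) (z := z)
      have hq2 : ‖Qf A B C E z‖ ≤ 2*‖z‖^2 := by nlinarith [norm_nonneg z, abs_nonneg A, abs_nonneg B, abs_nonneg C, abs_nonneg E, hz1, hzK, hK]
      have hp2 : ‖Pr A B z‖ ≤ 2*‖z‖^2 := by nlinarith [norm_nonneg z, abs_nonneg A, abs_nonneg B, abs_nonneg C, abs_nonneg E, hz1, hzK, hK]
      have := mul_le_mul hq2 hp2 (norm_nonneg _) (by positivity)
      rw [Ff, norm_mul]
      calc ‖Qf A B C E z‖ * ‖Pr A B z‖ ≤ 2*‖z‖^2 * (2*‖z‖^2) := this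
        _ = 4*‖z‖^4 := by ring
    have hden : ‖z‖^4/16 ≤ ‖(z - (ω:ℂ)*I)^2 * (z + (ω:ℂ)*I)^2‖ := by
      rw [norm_mul, norm_pow, norm_pow]
      have d1 : (0:ℝ) ≤ ‖z‖/2 := by linarith
      calc ‖z‖^4/16 = (‖z‖/2)^2 * (‖z‖/2)^2 := by ring
        _ ≤ ‖z - (ω:ℂ)*I‖^2 * ‖z + (ω:ℂ)*I‖^2 := by
            apply mul_le_mul (pow_le_pow_left₀ d1 hd1 2) (pow_le_pow_left₀ d1 hd2 2)
              (by positivity) (by positivity)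
    calc ‖Ff A B C E z‖ ≤ 4*‖z‖^4 := hFle
      _ = 64 * (‖z‖^4/16) := by ring
      _ ≤ 64 * ‖(z - (ω:ℂ)*I)^2 * (z + (ω:ℂ)*I)^2‖ := by
          apply mul_le_mul_of_nonneg_left hden (by norm_num)
      _ ≤ max M₂ 64 * ‖(z - (ω:ℂ)*I)^2 * (z + (ω:ℂ)*I)^2‖ := by
          apply mul_le_mul_of_nonneg_right (le_max_right _ _) (le_of_lt hdenpos)

end

section
variable {A B C E ω : ℝ}

lemma norm_f_eq (w : ℂ) : ‖Complex.exp (-(Gf A B C E ω w))‖ = Real.exp (-(Gf A B C E ω w).re) := by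
  rw [Complex.norm_exp, Complex.neg_re]

lemma reG_nonneg_rhp (hω : ω ≠ 0)
    (h1 : A^2 - C^2 - 2*B = -2*ω^2) (h2 : B^2 - E^2 = ω^4)
    (hQ0 : Qf A B C E ((ω:ℂ)*I) = 0) (hQ0' : Qf A B C E (-((ω:ℂ)*I)) = 0)
    (hQd0 : Qd A B C E ((ω:ℂ)*I) = 0) (hQd0' : Qd A B C E (-((ω:ℂ)*I)) = 0) :
    ∀ z : ℂ, 0 ≤ z.re → 0 ≤ (Gf A B C E ω z).re := by
  obtain ⟨M, hM⟩ := exists_bound hω hQ0 hQ0' hQd0 hQd0'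
  have hfd : Differentiable ℂ (fun w => Complex.exp (-(Gf A B C E ω w))) :=
    (differentiable_Gf A B C E ω).neg.cexp
  have hPL : ∀ z : ℂ, 0 ≤ z.re → ‖Complex.exp (-(Gf A B C E ω z))‖ ≤ 1 := by
    intro z hz
    refine PhragmenLindelof.right_half_plane_of_bounded_on_real
      (f := fun w => Complex.exp (-(Gf A B C E ω w))) (C := 1) hfd.diffContOnCl ?_ ?_ ?_ hz
    · refine ⟨1, one_lt_two, 0, ?_⟩
      apply Asymptotics.IsBigO.of_bound (Real.exp M)
      rw [Filter.eventually_inf_principal]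
      apply Filter.Eventually.of_forall
      intro w hw
      rw [norm_f_eq]
      have hb : -(Gf A B C E ω w).re ≤ M := by
        have h1' := hM w (le_of_lt hw)
        have h2' := Complex.abs_re_le_norm (Gf A B C E ω w)
        cases abs_le.mp h2' with
        | intro ha hb => linarith
      have : Real.exp (-(Gf A B C E ω w).re) ≤ Real.exp M := Real.exp_le_exp.2 hb
      simpa using this
    · apply Filter.isBoundedUnder_of_eventually_le (a := Real.exp M)
      filter_upwards [Filter.eventually_ge_atTop (0:ℝ)] with x hx
      rw [norm_f_eq]
      have hb : -(Gf A B C E ω (x:ℂ)).re ≤ M := by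
        have h1' := hM (x:ℂ) (by simpa using hx)
        have h2' := Complex.abs_re_le_norm (Gf A B C E ω (x:ℂ))
        cases abs_le.mp h2' with
        | intro ha hb => linarith
      exact Real.exp_le_exp.2 hb
    · intro y
      rw [norm_f_eq]
      exact Real.exp_le_one_iff.2 (by simpa using reG_nonneg hω h1 h2 hQ0 hQ0' hQd0 hQd0' y)
  intro z hz
  have := hPL z hz
  rw [norm_f_eq] at this
  have := Real.exp_le_one_iff.1 this
  linarith

/-- THE KEY LEMMA: all roots of Q other than ±iω lie in the open left half-plane. -/
lemma key (hω : ω ≠ 0)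
    (h1 : A^2 - C^2 - 2*B = -2*ω^2) (h2 : B^2 - E^2 = ω^4)
    (hQ0 : Qf A B C E ((ω:ℂ)*I) = 0) (hQ0' : Qf A B C E (-((ω:ℂ)*I)) = 0)
    (hQd0 : Qd A B C E ((ω:ℂ)*I) = 0) (hQd0' : Qd A B C E (-((ω:ℂ)*I)) = 0) :
    ∀ z : ℂ, z ≠ (ω:ℂ)*I → z ≠ -((ω:ℂ)*I) → Qf A B C E z = 0 → z.re < 0 := by
  intro z hz1 hz2 hroot
  by_contra hcon
  push_neg at hcon
  rcases eq_or_lt_of_le hcon with heq | hpos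
  · -- z on the imaginary axis
    set y := z.im with hy
    have hzy : z = (y:ℂ)*I := by
      apply Complex.ext
      · simp [← heq]
      · simp [hy]
    have habs : ‖Pf A B ((y:ℂ)*I)‖ = ‖Lf C E ((y:ℂ)*I)‖ := by
      have hsp := Qf_split A B C E ((y:ℂ)*I)
      rw [hzy] at hroot
      have hPev : Pf A B ((y:ℂ)*I) = -(Complex.exp (-((y:ℂ)*I)) * Lf C E ((y:ℂ)*I)) := by
        linear_combination hroot - hsp
      rw [hPev, norm_neg]
      rw [norm_mul, abs_exp_neg_yI, one_mul]
    have hid := axis_identity (A := A) (B := B) (C := C) (E := E) (ω := ω) h1 h2 y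
    have hzero : ((y:ℝ)^2 - ω^2)^2 = 0 := by rw [← hid, habs]; ring
    have hfac : ((y:ℝ) - ω) * (y + ω) = 0 := by
      have := pow_eq_zero_iff (n := 2) two_ne_zero |>.1 hzero
      linear_combination this
    rcases mul_eq_zero.1 hfac with h | h
    · exact hz1 (by rw [hzy, show y = ω by linarith])
    · refine hz2 ?_
      rw [hzy, show y = -ω by linarith]
      push_cast
      ring
  · -- interior root: maximum modulus contradiction
    have hGz : Gf A B C E ω z = 0 := by
      rw [G_eq hω hQ0 hQ0' hQd0 hQd0' hz1 hz2]
      unfold Ff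
      rw [hroot, zero_mul, zero_div]
    have hrhp := reG_nonneg_rhp hω h1 h2 hQ0 hQ0' hQd0 hQd0'
    have hfd : Differentiable ℂ (fun w => Complex.exp (-(Gf A B C E ω w))) :=
      (differentiable_Gf A B C E ω).neg.cexp
    set U : Set ℂ := {w : ℂ | 0 < w.re} with hU
    have hUo : IsOpen U := isOpen_lt continuous_const Complex.continuous_re
    have hUc : IsPreconnected U := (convex_halfSpace_re_gt 0).isPreconnected
    have hzU : z ∈ U := hpos
    have hfz : Complex.exp (-(Gf A B C E ω z)) = 1 := by rw [hGz]; simp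
    have hmax : IsMaxOn (norm ∘ fun w => Complex.exp (-(Gf A B C E ω w))) U z := by
      intro w hw
      have hb : ‖Complex.exp (-(Gf A B C E ω w))‖ ≤ 1 := by
        rw [norm_f_eq]
        exact Real.exp_le_one_iff.2 (by linarith [hrhp w (le_of_lt hw)])
      simp only [Function.comp]
      rw [hfz]
      simpa using hb
    have heqOn := Complex.eqOn_of_isPreconnected_of_isMaxOn_norm hUc hUo
      hfd.differentiableOn hzU hmax
    set K : ℝ := 1 + |A| + |B| + |C| + |E| with hK
    have hK1 : 1 ≤ K := by
      have := abs_nonneg A; have := abs_nonneg B; have := abs_nonneg C; have := abs_nonneg E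
      linarith
    have hKU : (K:ℂ) ∈ U := by
      simp only [hU, Set.mem_setOf_eq, Complex.ofReal_re]
      linarith
    have hfK := heqOn hKU
    simp only [Function.const] at hfK
    rw [hfz] at hfK
    have hnormK : Real.exp (-(Gf A B C E ω (K:ℂ)).re) = 1 := by
      rw [← norm_f_eq (A := A) (B := B) (C := C) (E := E) (ω := ω) (K:ℂ), hfK]
      simp
    have hGK0 : (Gf A B C E ω (K:ℂ)).re = 0 := by
      have := (Real.exp_eq_one_iff _).1 hnormK
      linarith
    -- now compute G at K and derive positivity
    have hKne1 : (K:ℂ) ≠ (ω:ℂ)*I := by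
      intro h
      have := congrArg Complex.re h
      simp at this
      linarith
    have hKne2 : (K:ℂ) ≠ -((ω:ℂ)*I) := by
      intro h
      have := congrArg Complex.re h
      simp at this
      linarith
    have hGKeq := G_eq hω hQ0 hQ0' hQd0 hQd0' hKne1 hKne2
    have hden : ((K:ℂ) - (ω:ℂ)*I)^2 * ((K:ℂ) + (ω:ℂ)*I)^2 = (((K^2+ω^2)^2 : ℝ) : ℂ) := by
      push_cast
      linear_combination (-(ω:ℂ)^2 * (2*(K:ℂ)^2 + (ω:ℂ)^2 - (ω:ℂ)^2*I^2)) * Complex.I_sq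
    set q : ℝ := K^2 + A*K + B + Real.exp (-K) * (C*K + E) with hq
    set p : ℝ := K^2 - A*K + B with hp
    have hqK : Qf A B C E (K:ℂ) = (q:ℂ) := by
      rw [hq]; unfold Qf; push_cast [Complex.ofReal_exp]; ring
    have hpK : Pr A B (K:ℂ) = (p:ℂ) := by
      rw [hp]; unfold Pr; push_cast; ring
    have hGKval : (Gf A B C E ω (K:ℂ)).re = q * p / ((K^2+ω^2)^2) := by
      rw [hGKeq, hden]
      unfold Ff
      rw [hqK, hpK, ← Complex.ofReal_mul, Complex.div_ofReal_re, Complex.ofReal_re]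
    -- positivity of q and p
    have hKpos : (0:ℝ) < K := by linarith
    have he1 : Real.exp (-K) ≤ 1 := Real.exp_le_one_iff.2 (by linarith)
    have he0 : (0:ℝ) < Real.exp (-K) := Real.exp_pos _
    have habsCE : |C*K + E| ≤ |C| * K + |E| := by
      refine (abs_add_le _ _).trans ?_
      rw [abs_mul, _root_.abs_of_nonneg (le_of_lt hKpos)]
    have hCE : -(|C| * K + |E|) ≤ Real.exp (-K) * (C*K + E) := by
      have hmul := mul_le_mul_of_nonneg_left (neg_abs_le (C*K+E)) (le_of_lt he0)
      have hsmall : Real.exp (-K) * |C*K+E| ≤ |C*K+E| :=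
        mul_le_of_le_one_left (abs_nonneg _) he1
      nlinarith [abs_nonneg (C*K+E)]
    have hsqK : K^2 = K*K := pow_two K
    have hAK : -(|A| * K) ≤ A * K := by
      have := mul_le_mul_of_nonneg_right (neg_abs_le A) (le_of_lt hKpos)
      linarith
    have hAK' : -(|A| * K) ≤ -(A * K) := by
      have := mul_le_mul_of_nonneg_right (neg_abs_le (-A)) (le_of_lt hKpos)
      rw [abs_neg] at this
      linarith
    have hexpand : K*K - (|A| + |C|)*K = K*(1 + |B| + |E|) := by rw [hK]; ring
    have hge : 1 ≤ K*K - (|A| + |C|)*K - (|B| + |E|) := by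
      have hnn : 0 ≤ (K - 1)*(|B| + |E|) :=
        mul_nonneg (by linarith) (by positivity)
      have hx : K*(1 + |B| + |E|) - (|B| + |E|) = K + (K-1)*(|B| + |E|) := by ring
      linarith [hexpand, hx, hnn, hK1]
    have hq1 : 1 ≤ q := by
      rw [hq]
      have hBB : -|B| ≤ B := neg_abs_le B
      linarith [hCE, hAK, hge, hsqK]
    have hp1 : 1 ≤ p := by
      rw [hp]
      have hBB : -|B| ≤ B := neg_abs_le B
      have hCEnn : 0 ≤ |C| * K + |E| := by positivity
      linarith [hAK', hge, hsqK, hCEnn]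
    have hfinal : 0 < q * p / ((K^2+ω^2)^2) := by positivity
    rw [hGKval] at hGK0
    linarith

end

lemma sin_sq_lt_sq {x : ℝ} (hx : x ≠ 0) : Real.sin x ^ 2 < x ^ 2 := by
  have main : ∀ y : ℝ, 0 < y → Real.sin y ^ 2 < y ^ 2 := by
    intro y hy
    have hlt : Real.sin y < y := Real.sin_lt hy
    have hgt : -y < Real.sin y := by
      rcases le_or_gt y 1 with h1 | h1
      · have : 0 < Real.sin y :=
          Real.sin_pos_of_pos_of_lt_pi hy (lt_of_le_of_lt h1 (by linarith [Real.pi_gt_three]))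
        linarith
      · have := Real.neg_one_le_sin y
        linarith
    exact sq_lt_sq' hgt hlt
  rcases lt_or_gt_of_ne hx with h | h
  · have := main (-x) (by linarith)
    rw [Real.sin_neg] at this
    simpa using this
  · exact main x h

lemma exp_neg_real_mul_I (x : ℝ) :
    Complex.exp (-((x:ℂ)*I)) = ((Real.cos x : ℝ) : ℂ) - ((Real.sin x : ℝ) : ℂ)*I := by
  have h : -((x:ℂ)*I) = (((-x : ℝ)) : ℂ)*I := by push_cast; ring
  rw [h, Complex.exp_mul_I, ← Complex.ofReal_cos, ← Complex.ofReal_sin,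
    Real.cos_neg, Real.sin_neg]
  push_cast; ring

lemma exp_pos_real_mul_I (x : ℝ) :
    Complex.exp (-(-((x:ℂ)*I))) = ((Real.cos x : ℝ) : ℂ) + ((Real.sin x : ℝ) : ℂ)*I := by
  rw [neg_neg, Complex.exp_mul_I, ← Complex.ofReal_cos, ← Complex.ofReal_sin]


end QPMID

end

open QPMID

/-- If the coefficients of Δ are chosen so that s₀ = σ₀ + iθ₀ (θ₀ ≠ 0) and
its conjugate are roots of multiplicity 2, then s₀ and conj s₀ form a pair of strictly
dominant roots of Δ. -/
theorem complex_pair_strictly_dominant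
    (τ σ₀ θ₀ a₁ a₀ α₁ α₀ D : ℝ) (hτ : 0 < τ) (hθ₀ : θ₀ ≠ 0)
    (s₀ : ℂ) (hs₀ : s₀ = σ₀ + θ₀ * Complex.I)
    (hD : D = τ ^ 2 * θ₀ ^ 2 - Real.sin (τ * θ₀) ^ 2)
    (ha₁ : a₁ = -2 * σ₀ - 2 * θ₀ * (τ * θ₀ - Real.sin (τ * θ₀) * Real.cos (τ * θ₀)) / D)
    (ha₀ : a₀ = σ₀ ^ 2 + 2 * σ₀ * θ₀ * (τ * θ₀ - Real.sin (τ * θ₀) * Real.cos (τ * θ₀)) / D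
            + θ₀ ^ 2 * (τ ^ 2 * θ₀ ^ 2 + Real.sin (τ * θ₀) ^ 2) / D)
    (hα₁ : α₁ = 2 * θ₀ * Real.exp (σ₀ * τ) *
            (τ * θ₀ * Real.cos (τ * θ₀) - Real.sin (τ * θ₀)) / D)
    (hα₀ : α₀ = 2 * θ₀ * Real.exp (σ₀ * τ) *
            (σ₀ * (Real.sin (τ * θ₀) - τ * θ₀ * Real.cos (τ * θ₀))
              - τ * θ₀ ^ 2 * Real.sin (τ * θ₀)) / D)
    (Δ : ℂ → ℂ)
    (hΔ : ∀ s : ℂ, Δ s = s ^ 2 + a₁ * s + a₀ + Complex.exp (-s * τ) * (α₁ * s + α₀)) :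
    Δ s₀ = 0 ∧ Δ (conj s₀) = 0 ∧
      ∀ s : ℂ, s ≠ s₀ → s ≠ conj s₀ → Δ s = 0 → s.re < σ₀ := by
  subst hD
  set T : ℝ := Real.sin (τ * θ₀) with hT
  set Co : ℝ := Real.cos (τ * θ₀) with hCo
  have hτ0 : τ ≠ 0 := ne_of_gt hτ
  have hω : τ * θ₀ ≠ 0 := mul_ne_zero hτ0 hθ₀
  have hpyth : T^2 + Co^2 = 1 := Real.sin_sq_add_cos_sq (τ * θ₀)
  have hDpos : 0 < τ^2*θ₀^2 - T^2 := by
    have := sin_sq_lt_sq hω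
    rw [← hT] at this
    nlinarith [this]
  have hD0 : τ^2*θ₀^2 - T^2 ≠ 0 := ne_of_gt hDpos
  -- normalized coefficients
  set A : ℝ := τ*(a₁ + 2*σ₀) with hAdef
  set B : ℝ := τ^2*(σ₀^2 + a₁*σ₀ + a₀) with hBdef
  set C : ℝ := τ*(α₁*Real.exp (-(σ₀*τ))) with hCdef
  set E : ℝ := τ^2*((σ₀*α₁ + α₀)*Real.exp (-(σ₀*τ))) with hEdef
  have hee : Real.exp (σ₀*τ) * Real.exp (-(σ₀*τ)) = 1 := by
    rw [← Real.exp_add]; simp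
  -- cleared-denominator forms
  have hA' : A*(τ^2*θ₀^2 - T^2) = -2*(τ*θ₀)*((τ*θ₀) - T*Co) := by
    rw [hAdef, ha₁]; field_simp; ring
  have hB' : B*(τ^2*θ₀^2 - T^2) = (τ*θ₀)^2*((τ*θ₀)^2 + T^2) := by
    rw [hBdef, ha₁, ha₀]; field_simp; ring
  have hC' : C*(τ^2*θ₀^2 - T^2) = 2*(τ*θ₀)*((τ*θ₀)*Co - T) := by
    rw [hCdef, hα₁]; field_simp
    have hee' : Real.exp (τ*σ₀) * Real.exp (-(τ*σ₀)) = 1 := by rw [← Real.exp_add]; simp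
    linear_combination (τ*θ₀*Co - T) * hee'
  have hE' : E*(τ^2*θ₀^2 - T^2) = -2*(τ*θ₀)^3*T := by
    rw [hEdef, hα₁, hα₀]; field_simp
    have hee' : Real.exp (τ*σ₀) * Real.exp (-(τ*σ₀)) = 1 := by rw [← Real.exp_add]; simp
    linear_combination (-τ*θ₀^2*T) * hee'
  -- the four structural identities
  have h1 : A^2 - C^2 - 2*B = -2*(τ*θ₀)^2 := by
    have h1D : (A^2 - C^2 - 2*B)*(τ^2*θ₀^2 - T^2)^2 = (-2*(τ*θ₀)^2)*(τ^2*θ₀^2 - T^2)^2 := by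
      linear_combination (A*(τ^2*θ₀^2 - T^2) + (-2*(τ*θ₀)*((τ*θ₀) - T*Co))) * hA'
        - (C*(τ^2*θ₀^2 - T^2) + 2*(τ*θ₀)*((τ*θ₀)*Co - T)) * hC'
        - 2*(τ^2*θ₀^2 - T^2)*hB'
        + (4*(τ*θ₀)^2*T^2 - 4*(τ*θ₀)^4) * hpyth
    exact mul_right_cancel₀ (pow_ne_zero 2 hD0) h1D
  have h2 : B^2 - E^2 = (τ*θ₀)^4 := by
    have h2D : (B^2 - E^2)*(τ^2*θ₀^2 - T^2)^2 = ((τ*θ₀)^4)*(τ^2*θ₀^2 - T^2)^2 := by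
      linear_combination (B*(τ^2*θ₀^2 - T^2) + (τ*θ₀)^2*((τ*θ₀)^2 + T^2)) * hB'
        - (E*(τ^2*θ₀^2 - T^2) + (-2*(τ*θ₀)^3*T)) * hE'
    exact mul_right_cancel₀ (pow_ne_zero 2 hD0) h2D
  -- complex cast versions
  have hA'c : (A:ℂ)*(((τ:ℂ)*θ₀)^2 - (T:ℂ)^2)
      = -2*((τ:ℂ)*θ₀)*(((τ:ℂ)*θ₀) - (T:ℂ)*(Co:ℂ)) := by
    have h := congrArg (fun r : ℝ => (r:ℂ)) hA'
    push_cast at h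
    linear_combination h
  have hB'c : (B:ℂ)*(((τ:ℂ)*θ₀)^2 - (T:ℂ)^2)
      = (((τ:ℂ)*θ₀))^2*((((τ:ℂ)*θ₀))^2 + (T:ℂ)^2) := by
    have h := congrArg (fun r : ℝ => (r:ℂ)) hB'
    push_cast at h
    linear_combination h
  have hC'c : (C:ℂ)*(((τ:ℂ)*θ₀)^2 - (T:ℂ)^2)
      = 2*((τ:ℂ)*θ₀)*(((τ:ℂ)*θ₀)*(Co:ℂ) - (T:ℂ)) := by
    have h := congrArg (fun r : ℝ => (r:ℂ)) hC'
    push_cast at h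
    linear_combination h
  have hE'c : (E:ℂ)*(((τ:ℂ)*θ₀)^2 - (T:ℂ)^2) = -2*(((τ:ℂ)*θ₀))^3*(T:ℂ) := by
    have h := congrArg (fun r : ℝ => (r:ℂ)) hE'
    push_cast at h
    linear_combination h
  have hpythc : (T:ℂ)^2 + (Co:ℂ)^2 = 1 := by exact_mod_cast hpyth
  have hD0c : (((τ:ℂ)*θ₀)^2 - (T:ℂ)^2) ≠ 0 := by
    intro h
    apply hD0
    have : ((τ^2*θ₀^2 - T^2 : ℝ) : ℂ) = 0 := by push_cast; linear_combination h
    exact_mod_cast this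
  -- the four root conditions
  have hQ0 : Qf A B C E ((((τ*θ₀ : ℝ)):ℂ)*I) = 0 := by
    have hmul : Qf A B C E ((((τ*θ₀ : ℝ)):ℂ)*I) * (((τ:ℂ)*θ₀)^2 - (T:ℂ)^2) = 0 := by
      unfold Qf
      rw [exp_neg_real_mul_I (τ*θ₀), ← hT, ← hCo]
      push_cast
      linear_combination (((τ:ℂ)*θ₀)*I) * hA'c + hB'c
        + ((Co:ℂ) - (T:ℂ)*I)*((((τ:ℂ)*θ₀)*I)*hC'c + hE'c)
        + (((τ:ℂ)*θ₀)^2*(T:ℂ)^2 - 2*((τ:ℂ)*θ₀)^3*(T:ℂ)*(Co:ℂ) + ((τ:ℂ)*θ₀)^4) * Complex.I_sq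
        + (2*((τ:ℂ)*θ₀)^3*I) * hpythc
    rcases mul_eq_zero.mp hmul with h | h
    · exact h
    · exact absurd h hD0c
  have hQ0' : Qf A B C E (-((((τ*θ₀ : ℝ)):ℂ)*I)) = 0 := by
    have hmul : Qf A B C E (-((((τ*θ₀ : ℝ)):ℂ)*I)) * (((τ:ℂ)*θ₀)^2 - (T:ℂ)^2) = 0 := by
      unfold Qf
      rw [exp_pos_real_mul_I (τ*θ₀), ← hT, ← hCo]
      push_cast
      linear_combination (-(((τ:ℂ)*θ₀)*I)) * hA'c + hB'c
        + ((Co:ℂ) + (T:ℂ)*I)*((-(((τ:ℂ)*θ₀)*I))*hC'c + hE'c)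
        + (((τ:ℂ)*θ₀)^2*(T:ℂ)^2 - 2*((τ:ℂ)*θ₀)^3*(T:ℂ)*(Co:ℂ) + ((τ:ℂ)*θ₀)^4) * Complex.I_sq
        + (-2*((τ:ℂ)*θ₀)^3*I) * hpythc
    rcases mul_eq_zero.mp hmul with h | h
    · exact h
    · exact absurd h hD0c
  have hQd0 : Qd A B C E ((((τ*θ₀ : ℝ)):ℂ)*I) = 0 := by
    have hmul : Qd A B C E ((((τ*θ₀ : ℝ)):ℂ)*I) * (((τ:ℂ)*θ₀)^2 - (T:ℂ)^2) = 0 := by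
      unfold Qd
      rw [exp_neg_real_mul_I (τ*θ₀), ← hT, ← hCo]
      push_cast
      linear_combination hA'c
        + ((Co:ℂ) - (T:ℂ)*I)*(hC'c - (((τ:ℂ)*θ₀)*I)*hC'c - hE'c)
        + (-2*((τ:ℂ)*θ₀)^2*(T:ℂ)^2 + 2*((τ:ℂ)*θ₀)^3*(T:ℂ)*(Co:ℂ)) * Complex.I_sq
        + (2*((τ:ℂ)*θ₀)^2 - 2*((τ:ℂ)*θ₀)^3*I) * hpythc
    rcases mul_eq_zero.mp hmul with h | h
    · exact h
    · exact absurd h hD0c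
  have hQd0' : Qd A B C E (-((((τ*θ₀ : ℝ)):ℂ)*I)) = 0 := by
    have hmul : Qd A B C E (-((((τ*θ₀ : ℝ)):ℂ)*I)) * (((τ:ℂ)*θ₀)^2 - (T:ℂ)^2) = 0 := by
      unfold Qd
      rw [exp_pos_real_mul_I (τ*θ₀), ← hT, ← hCo]
      push_cast
      linear_combination hA'c
        + ((Co:ℂ) + (T:ℂ)*I)*(hC'c + (((τ:ℂ)*θ₀)*I)*hC'c - hE'c)
        + (-2*((τ:ℂ)*θ₀)^2*(T:ℂ)^2 + 2*((τ:ℂ)*θ₀)^3*(T:ℂ)*(Co:ℂ)) * Complex.I_sq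
        + (2*((τ:ℂ)*θ₀)^2 + 2*((τ:ℂ)*θ₀)^3*I) * hpythc
    rcases mul_eq_zero.mp hmul with h | h
    · exact h
    · exact absurd h hD0c
  -- the bridge between Δ and Q
  have hbridge : ∀ s : ℂ, (τ:ℂ)^2 * Δ s = Qf A B C E ((τ:ℂ)*(s - σ₀)) := by
    intro s
    rw [hΔ s]
    unfold Qf
    have hsplit : Complex.exp (-((τ:ℂ)*(s - σ₀)))
        = Complex.exp ((σ₀:ℂ)*τ) * Complex.exp (-s*τ) := by
      rw [← Complex.exp_add]; ring_nf
    rw [hsplit]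
    have hAc : (A:ℂ) = (τ:ℂ)*(a₁ + 2*σ₀) := by rw [hAdef]; push_cast; ring
    have hBc : (B:ℂ) = (τ:ℂ)^2*((σ₀:ℂ)^2 + a₁*σ₀ + a₀) := by rw [hBdef]; push_cast; ring
    have hCc : (C:ℂ) = (τ:ℂ)*((α₁:ℂ)*Complex.exp (-((σ₀:ℂ)*τ))) := by
      rw [hCdef]; push_cast [Complex.ofReal_exp]; ring_nf
    have hEc : (E:ℂ) = (τ:ℂ)^2*(((σ₀:ℂ)*α₁ + α₀)*Complex.exp (-((σ₀:ℂ)*τ))) := by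
      rw [hEdef]; push_cast [Complex.ofReal_exp]; ring_nf
    have hXinv : Complex.exp ((σ₀:ℂ)*τ) * Complex.exp (-((σ₀:ℂ)*τ)) = 1 := by
      rw [← Complex.exp_add]; simp
    rw [hAc, hBc, hCc, hEc]
    linear_combination (-(Complex.exp (-s*τ) * ((τ:ℂ)^2*((α₁:ℂ)*s + α₀)))) * hXinv
  have hτc : ((τ:ℂ)) ≠ 0 := by exact_mod_cast hτ0
  have hτc2 : ((τ:ℂ))^2 ≠ 0 := pow_ne_zero 2 hτc
  have hconj : conj s₀ = (σ₀:ℂ) - (θ₀:ℂ)*I := by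
    rw [hs₀, map_add, map_mul, Complex.conj_ofReal, Complex.conj_ofReal, Complex.conj_I]
    ring
  refine ⟨?_, ?_, ?_⟩
  · have hb := hbridge s₀
    have harg : (τ:ℂ)*(s₀ - σ₀) = (((τ*θ₀ : ℝ)):ℂ)*I := by rw [hs₀]; push_cast; ring
    rw [harg, hQ0] at hb
    exact (mul_eq_zero.mp hb).resolve_left hτc2
  · have hb := hbridge (conj s₀)
    have harg : (τ:ℂ)*(conj s₀ - σ₀) = -((((τ*θ₀ : ℝ)):ℂ)*I) := by
      rw [hconj]; push_cast; ring
    rw [harg, hQ0'] at hb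
    exact (mul_eq_zero.mp hb).resolve_left hτc2
  · intro s hne1 hne2 hroot
    have hb := hbridge s
    rw [hroot, mul_zero] at hb
    have hzne1 : (τ:ℂ)*(s - σ₀) ≠ (((τ*θ₀ : ℝ)):ℂ)*I := by
      intro h
      apply hne1
      have h2' : (τ:ℂ)*(s - σ₀) = (τ:ℂ)*((θ₀:ℂ)*I) := by rw [h]; push_cast; ring
      have h3' := mul_left_cancel₀ hτc h2'
      rw [hs₀]
      linear_combination h3'
    have hzne2 : (τ:ℂ)*(s - σ₀) ≠ -((((τ*θ₀ : ℝ)):ℂ)*I) := by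
      intro h
      apply hne2
      have h2' : (τ:ℂ)*(s - σ₀) = (τ:ℂ)*(-((θ₀:ℂ)*I)) := by rw [h]; push_cast; ring
      have h3' := mul_left_cancel₀ hτc h2'
      rw [hconj]
      linear_combination h3'
    have hkey := key hω h1 h2 hQ0 hQ0' hQd0 hQd0' ((τ:ℂ)*(s - σ₀)) hzne1 hzne2 hb.symm
    have hre : ((τ:ℂ)*(s - (σ₀:ℂ))).re = τ*(s.re - σ₀) := by
      rw [Complex.mul_re]
      simp
    rw [hre] at hkey
    nlinarith [hτ, hkey]
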